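/- Let K > 0 and t, x ∈ ℝ, and let n, u, φ : ℝ → ℝ → ℝ (first argument time, second argument space). Write N = n(t,·), U = u(t,·), Φ = φ(t,·). Assume: 1 + N(y) > 0 for all y; N and U have derivatives n_x and u_x at x; Φ is differentiable on ℝ and its derivative Φ' has derivative φ_{xx} at x; the maps s ↦ n(s,x) and s ↦ u(s,x) have derivatives n_t and u_t at t; and the Euler–Poisson equations hold at (t,x): n_t = −(n_x·U(x) + (1+N(x))·u_x), u_t = −(U(x)·u_x + K·n_x/(1+N(x)) + Φ'(x)), and −φ_{xx} = 1 + N(x) − exp(Φ(x)). Then the flux function y ↦ U(y)²/2 + N(y)·U(y)² + K·(N(y) − Real.log(1+N(y))) + exp(Φ(y)) − Φ(y) − Φ'(y)²/2 has derivative at x equal to −(n_t·U(x) + N(x)·u_t); that is, the local conservation law ∂ₜ(nu) + ∂ₓ[u²/2 + nu² + K(n − log(1+n)) + e^φ − φ − (∂ₓφ)²/2] = 0 holds at (t,x). -/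

import Mathlib

/-- Pointwise local conservation law for the momentum density `n·u` of the Euler–Poisson
system: if the equations hold at `(t,x)`, then the flux
`u²/2 + n·u² + K(n − log(1+n)) + e^φ − φ − (∂ₓφ)²/2` has spatial derivative
`−(∂ₜn·u + n·∂ₜu)` at `x`. -/
theorem euler_poisson_momentum_local_conservation
    (K t x : ℝ) (hK : 0 < K)
    (n u φ : ℝ → ℝ → ℝ)
    (nt ut nx ux φxx : ℝ)
    (hpos : ∀ y : ℝ, 1 + n t y > 0)
    (hnx : HasDerivAt (n t) nx x)
    (hux : HasDerivAt (u t) ux x)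
    (hφ : Differentiable ℝ (φ t))
    (hφxx : HasDerivAt (deriv (φ t)) φxx x)
    (hnt : HasDerivAt (fun s => n s x) nt t)
    (hut : HasDerivAt (fun s => u s x) ut t)
    (heqn : nt = -(nx * u t x + (1 + n t x) * ux))
    (hequ : ut = -(u t x * ux + K * nx / (1 + n t x) + deriv (φ t) x))
    (heqφ : -φxx = 1 + n t x - Real.exp (φ t x)) :
    HasDerivAt
      (fun y => (u t y) ^ 2 / 2 + n t y * (u t y) ^ 2
        + K * (n t y - Real.log (1 + n t y))
        + Real.exp (φ t y) - φ t y - (deriv (φ t) y) ^ 2 / 2)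
      (-(nt * u t x + n t x * ut)) x := by
  have hne : 1 + n t x ≠ 0 := ne_of_gt (hpos x)
  have hφx : HasDerivAt (φ t) (deriv (φ t) x) x := (hφ x).hasDerivAt
  have h1 : HasDerivAt (fun y => 1 + n t y) nx x := by
    have h := (hasDerivAt_const x (1:ℝ)).add hnx
    rw [zero_add] at h
    exact h
  have hlog : HasDerivAt (fun y => Real.log (1 + n t y)) (nx / (1 + n t x)) x :=
    h1.log hne
  have hD : HasDerivAt
      (fun y => (u t y) ^ 2 / 2 + n t y * (u t y) ^ 2
        + K * (n t y - Real.log (1 + n t y))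
        + Real.exp (φ t y) - φ t y - (deriv (φ t) y) ^ 2 / 2)
      ((2 * u t x * ux) / 2 + (nx * (u t x) ^ 2 + n t x * (2 * u t x * ux))
        + K * (nx - nx / (1 + n t x))
        + Real.exp (φ t x) * deriv (φ t) x - deriv (φ t) x
        - (2 * deriv (φ t) x * φxx) / 2) x := by
    have := (((((hux.pow 2).div_const 2).add
      (hnx.mul (hux.pow 2))).add
      ((hnx.sub hlog).const_mul K)).add
      (hφx.exp)).sub hφx |>.sub ((hφxx.pow 2).div_const 2)
    exact this.congr_deriv (by norm_num)
  convert hD using 1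
  subst heqn hequ
  have hexp : Real.exp (φ t x) = 1 + n t x + φxx := by linarith
  rw [hexp]
  field_simp
  ring
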